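/- For positive reals t, and N×N, n×n nonnegative diagonal matrices D and D̃, the system δ = (1/n)·tr(D(I + t·δ̃·D)⁻¹), δ̃ = (1/n)·tr(D̃(I + t·δ·D̃)⁻¹) admits a unique solution (δ, δ̃) with δ > 0 and δ̃ > 0, provided tr(D) > 0 and tr(D̃) > 0. -/

import Mathlib

open Matrix

section Aux

variable {m n : ℕ} {v : Fin m → ℝ} {t : ℝ}

private lemma den_pos (hv : ∀ i, 0 ≤ v i) (ht : 0 < t) {y : ℝ} (hy : 0 ≤ y) (i : Fin m) :
    (0:ℝ) < 1 + t * y * v i := by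
  have := mul_nonneg (mul_nonneg ht.le hy) (hv i); linarith

/-- matrix trace reduction -/
private lemma trace_inv_eq (v : Fin m → ℝ) (hv : ∀ i, 0 ≤ v i) (c : ℝ) (hc : 0 ≤ c) :
    (Matrix.diagonal v * (1 + c • Matrix.diagonal v)⁻¹).trace
      = ∑ i, v i / (1 + c * v i) := by
  have hpos : ∀ i, (0:ℝ) < 1 + c * v i := fun i => by
    have := mul_nonneg hc (hv i); linarith
  have h1 : (1 : Matrix (Fin m) (Fin m) ℝ) + c • Matrix.diagonal v
      = Matrix.diagonal (fun i => 1 + c * v i) := by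
    ext i j
    by_cases h : i = j <;>
      simp [Matrix.one_apply, Matrix.diagonal_apply, h]
  have h2 : (Matrix.diagonal (fun i => 1 + c * v i))⁻¹
      = Matrix.diagonal (fun i => (1 + c * v i)⁻¹) := by
    apply Matrix.inv_eq_right_inv
    rw [Matrix.diagonal_mul_diagonal]
    convert Matrix.diagonal_one
    exact mul_inv_cancel₀ (hpos _).ne'
  rw [h1, h2, Matrix.diagonal_mul_diagonal, Matrix.trace_diagonal]
  simp [div_eq_mul_inv]

private noncomputable def Sfun (n : ℕ) (v : Fin m → ℝ) (t : ℝ) (y : ℝ) : ℝ :=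
  (1 / (n:ℝ)) * ∑ i, v i / (1 + t * y * v i)

private lemma Sfun_nonneg (hv : ∀ i, 0 ≤ v i) (ht : 0 < t) {y : ℝ} (hy : 0 ≤ y) :
    0 ≤ Sfun n v t y := by
  unfold Sfun
  apply mul_nonneg (by positivity)
  exact Finset.sum_nonneg fun i _ => div_nonneg (hv i) (den_pos hv ht hy i).le

private lemma Sfun_pos (hn : 0 < n) (hv : ∀ i, 0 ≤ v i) (ht : 0 < t)
    (hex : ∃ i, 0 < v i) {y : ℝ} (hy : 0 ≤ y) : 0 < Sfun n v t y := by
  obtain ⟨i₀, hi₀⟩ := hex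
  have hsum : 0 < ∑ i, v i / (1 + t * y * v i) := by
    apply Finset.sum_pos'
    · intro i _; exact div_nonneg (hv i) (den_pos hv ht hy i).le
    · exact ⟨i₀, Finset.mem_univ _, div_pos hi₀ (den_pos hv ht hy i₀)⟩
  have h1n : (0:ℝ) < 1 / n := by positivity
  exact mul_pos h1n hsum

private lemma Sfun_le (hv : ∀ i, 0 ≤ v i) (ht : 0 < t)
    {y : ℝ} (hy : 0 ≤ y) : Sfun n v t y ≤ Sfun n v t 0 := by
  unfold Sfun
  apply mul_le_mul_of_nonneg_left _ (by positivity)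
  apply Finset.sum_le_sum
  intro i _
  have h2 : (1:ℝ) ≤ 1 + t * y * v i := by
    have := mul_nonneg (mul_nonneg ht.le hy) (hv i); linarith
  calc v i / (1 + t * y * v i) ≤ v i / 1 :=
        div_le_div_of_nonneg_left (hv i) one_pos h2
    _ = v i / (1 + t * 0 * v i) := by norm_num

private lemma Sfun_contOn (hv : ∀ i, 0 ≤ v i) (ht : 0 < t) :
    ContinuousOn (Sfun n v t) (Set.Ici 0) := by
  unfold Sfun
  apply ContinuousOn.mul continuousOn_const
  apply continuousOn_finset_sum
  intro i _
  apply ContinuousOn.div continuousOn_const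
  · fun_prop
  · intro y hy
    exact (den_pos hv ht hy i).ne'

/-- difference identity -/
private lemma Sfun_diff (hv : ∀ i, 0 ≤ v i) (ht : 0 < t)
    {a b : ℝ} (ha : 0 ≤ a) (hb : 0 ≤ b) :
    Sfun n v t b - Sfun n v t a
      = (a - b) * ((t / n) * ∑ i, v i ^ 2 / ((1 + t * a * v i) * (1 + t * b * v i))) := by
  have key : ∀ i, v i / (1 + t * b * v i) - v i / (1 + t * a * v i)
      = (a - b) * (t * (v i ^ 2 / ((1 + t * a * v i) * (1 + t * b * v i)))) := by
    intro i
    have h1 := den_pos hv ht ha i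
    have h2 := den_pos hv ht hb i
    rw [div_sub_div _ _ h2.ne' h1.ne', mul_div_assoc', mul_div_assoc', div_eq_div_iff (by positivity) (by positivity)]
    ring
  unfold Sfun
  rw [← mul_sub, ← Finset.sum_sub_distrib]
  simp_rw [key]
  rw [← Finset.mul_sum, ← Finset.mul_sum]
  ring

/-- kernel sum positivity -/
private lemma ker_pos (hn : 0 < n) (hv : ∀ i, 0 ≤ v i) (ht : 0 < t)
    (hex : ∃ i, 0 < v i) {a b : ℝ} (ha : 0 ≤ a) (hb : 0 ≤ b) :
    0 < (t / n) * ∑ i, v i ^ 2 / ((1 + t * a * v i) * (1 + t * b * v i)) := by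
  obtain ⟨i₀, hi₀⟩ := hex
  have hsum : 0 < ∑ i, v i ^ 2 / ((1 + t * a * v i) * (1 + t * b * v i)) := by
    apply Finset.sum_pos'
    · intro i _
      exact div_nonneg (sq_nonneg _) (mul_nonneg (den_pos hv ht ha i).le (den_pos hv ht hb i).le)
    · exact ⟨i₀, Finset.mem_univ _,
        div_pos (pow_pos hi₀ 2) (mul_pos (den_pos hv ht ha i₀) (den_pos hv ht hb i₀))⟩
  have htn : (0:ℝ) < t / n := by positivity
  exact mul_pos htn hsum

private lemma ker_term_le (hv : ∀ i, 0 ≤ v i) (ht : 0 < t)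
    {a b : ℝ} (ha : 0 ≤ a) (hb : 0 < b) (i : Fin m) :
    t * (v i ^ 2 / ((1 + t * a * v i) * (1 + t * b * v i)))
      ≤ (1 / b) * (v i / (1 + t * a * v i)) := by
  have h1 := den_pos hv ht ha i
  have h2 := den_pos hv ht hb.le i
  rw [show t * (v i ^ 2 / ((1 + t * a * v i) * (1 + t * b * v i)))
        = (t * v i ^ 2) / ((1 + t * a * v i) * (1 + t * b * v i)) from by ring,
      show (1 / b) * (v i / (1 + t * a * v i)) = v i / (b * (1 + t * a * v i)) from by
        field_simp]
  rw [div_le_div_iff₀ (by positivity) (by positivity)]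
  nlinarith [mul_nonneg (mul_nonneg (hv i) h1.le) (mul_nonneg ht.le (mul_nonneg hb.le (hv i))),
    mul_nonneg (hv i) h1.le]

private lemma ker_term_lt (hv : ∀ i, 0 ≤ v i) (ht : 0 < t)
    {a b : ℝ} (ha : 0 ≤ a) (hb : 0 < b) {i : Fin m} (hi : 0 < v i) :
    t * (v i ^ 2 / ((1 + t * a * v i) * (1 + t * b * v i)))
      < (1 / b) * (v i / (1 + t * a * v i)) := by
  have h1 := den_pos hv ht ha i
  have h2 := den_pos hv ht hb.le i
  rw [show t * (v i ^ 2 / ((1 + t * a * v i) * (1 + t * b * v i)))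
        = (t * v i ^ 2) / ((1 + t * a * v i) * (1 + t * b * v i)) from by ring,
      show (1 / b) * (v i / (1 + t * a * v i)) = v i / (b * (1 + t * a * v i)) from by
        field_simp]
  rw [div_lt_div_iff₀ (by positivity) (by positivity)]
  nlinarith [mul_pos hi h1]

/-- kernel bound, strict version -/
private lemma ker_lt (hn : 0 < n) (hv : ∀ i, 0 ≤ v i) (ht : 0 < t)
    (hex : ∃ i, 0 < v i) {a b : ℝ} (ha : 0 ≤ a) (hb : 0 < b) :
    (t / n) * ∑ i, v i ^ 2 / ((1 + t * a * v i) * (1 + t * b * v i))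
      < (1 / b) * Sfun n v t a := by
  obtain ⟨i₀, hi₀⟩ := hex
  have hsum : ∑ i, t * (v i ^ 2 / ((1 + t * a * v i) * (1 + t * b * v i)))
      < ∑ i, (1 / b) * (v i / (1 + t * a * v i)) :=
    Finset.sum_lt_sum (fun i _ => ker_term_le hv ht ha hb i)
      ⟨i₀, Finset.mem_univ _, ker_term_lt hv ht ha hb hi₀⟩
  have h1n : (0:ℝ) < 1 / n := by positivity
  have := mul_lt_mul_of_pos_left hsum h1n
  calc (t / n) * ∑ i, v i ^ 2 / ((1 + t * a * v i) * (1 + t * b * v i))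
      = (1 / n) * ∑ i, t * (v i ^ 2 / ((1 + t * a * v i) * (1 + t * b * v i))) := by
        rw [Finset.mul_sum, Finset.mul_sum]; exact Finset.sum_congr rfl fun i _ => by ring
    _ < (1 / n) * ∑ i, (1 / b) * (v i / (1 + t * a * v i)) := this
    _ = (1 / b) * Sfun n v t a := by
        unfold Sfun
        rw [Finset.mul_sum, Finset.mul_sum, Finset.mul_sum]
        exact Finset.sum_congr rfl fun i _ => by ring

/-- kernel bound, non-strict version -/
private lemma ker_le (hn : 0 < n) (hv : ∀ i, 0 ≤ v i) (ht : 0 < t)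
    {a b : ℝ} (ha : 0 ≤ a) (hb : 0 < b) :
    (t / n) * ∑ i, v i ^ 2 / ((1 + t * a * v i) * (1 + t * b * v i))
      ≤ (1 / b) * Sfun n v t a := by
  have hsum : ∑ i, t * (v i ^ 2 / ((1 + t * a * v i) * (1 + t * b * v i)))
      ≤ ∑ i, (1 / b) * (v i / (1 + t * a * v i)) :=
    Finset.sum_le_sum (fun i _ => ker_term_le hv ht ha hb i)
  have h1n : (0:ℝ) ≤ 1 / n := by positivity
  have := mul_le_mul_of_nonneg_left hsum h1n
  calc (t / n) * ∑ i, v i ^ 2 / ((1 + t * a * v i) * (1 + t * b * v i))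
      = (1 / n) * ∑ i, t * (v i ^ 2 / ((1 + t * a * v i) * (1 + t * b * v i))) := by
        rw [Finset.mul_sum, Finset.mul_sum]; exact Finset.sum_congr rfl fun i _ => by ring
    _ ≤ (1 / n) * ∑ i, (1 / b) * (v i / (1 + t * a * v i)) := this
    _ = (1 / b) * Sfun n v t a := by
        unfold Sfun
        rw [Finset.mul_sum, Finset.mul_sum, Finset.mul_sum]
        exact Finset.sum_congr rfl fun i _ => by ring

end Aux

/-- Existence and uniqueness of the positive solution of the canonical system
δ = (1/n)·tr(D(I + t·δ̃·D)⁻¹), δ̃ = (1/n)·tr(D̃(I + t·δ·D̃)⁻¹). -/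
theorem canonical_system_existence_uniqueness
    (N n : ℕ) (hn : 0 < n)
    (d : Fin N → ℝ) (dt : Fin n → ℝ)
    (hd : ∀ i, 0 ≤ d i) (hdt : ∀ j, 0 ≤ dt j)
    (t : ℝ) (ht : 0 < t)
    (htrD : 0 < (Matrix.diagonal d).trace)
    (htrDt : 0 < (Matrix.diagonal dt).trace) :
    ∃! p : ℝ × ℝ, 0 < p.1 ∧ 0 < p.2 ∧
      p.1 = (1 / (n : ℝ)) *
        (Matrix.diagonal d * (1 + (t * p.2) • Matrix.diagonal d)⁻¹).trace ∧
      p.2 = (1 / (n : ℝ)) *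
        (Matrix.diagonal dt * (1 + (t * p.1) • Matrix.diagonal dt)⁻¹).trace := by
  have hsumd : 0 < ∑ i, d i := by rwa [Matrix.trace_diagonal] at htrD
  have hsumdt : 0 < ∑ j, dt j := by rwa [Matrix.trace_diagonal] at htrDt
  have hexd : ∃ i, 0 < d i := by
    by_contra h; push_neg at h
    have : ∑ i, d i ≤ 0 := Finset.sum_nonpos fun i _ => h i
    linarith
  have hexdt : ∃ j, 0 < dt j := by
    by_contra h; push_neg at h
    have : ∑ j, dt j ≤ 0 := Finset.sum_nonpos fun j _ => h j
    linarith
  -- bridge between trace form and Sfun form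
  have cond1 : ∀ y : ℝ, 0 ≤ y →
      (1 / (n : ℝ)) * (Matrix.diagonal d * (1 + (t * y) • Matrix.diagonal d)⁻¹).trace
        = Sfun n d t y := by
    intro y hy
    rw [trace_inv_eq d hd (t * y) (mul_nonneg ht.le hy)]
    rfl
  have cond2 : ∀ x : ℝ, 0 ≤ x →
      (1 / (n : ℝ)) * (Matrix.diagonal dt * (1 + (t * x) • Matrix.diagonal dt)⁻¹).trace
        = Sfun n dt t x := by
    intro x hx
    rw [trace_inv_eq dt hdt (t * x) (mul_nonneg ht.le hx)]
    rfl
  -- core uniqueness argument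
  have huniq : ∀ x₁ y₁ x₂ y₂ : ℝ, 0 < x₁ → 0 < y₁ → 0 < x₂ → 0 < y₂ →
      x₁ = Sfun n d t y₁ → y₁ = Sfun n dt t x₁ →
      x₂ = Sfun n d t y₂ → y₂ = Sfun n dt t x₂ → ¬ x₁ < x₂ := by
    intro x₁ y₁ x₂ y₂ hx₁ hy₁ hx₂ hy₂ e1 f1 e2 f2 hlt
    set A := (t / (n:ℝ)) * ∑ i, d i ^ 2 / ((1 + t * y₁ * d i) * (1 + t * y₂ * d i)) with hA
    set B := (t / (n:ℝ)) * ∑ j, dt j ^ 2 / ((1 + t * x₂ * dt j) * (1 + t * x₁ * dt j)) with hB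
    have eq1 : x₂ - x₁ = (y₁ - y₂) * A := by
      have h := Sfun_diff (n := n) hd ht hy₁.le hy₂.le
      rw [← e1, ← e2] at h
      exact h
    have eq2 : y₁ - y₂ = (x₂ - x₁) * B := by
      have h := Sfun_diff (n := n) hdt ht hx₂.le hx₁.le
      rw [← f1, ← f2] at h
      exact h
    have hBpos : 0 < B := ker_pos hn hdt ht hexdt hx₂.le hx₁.le
    have hAlt : A < (1 / y₂) * Sfun n d t y₁ := ker_lt hn hd ht hexd hy₁.le hy₂
    have hBle : B ≤ (1 / x₁) * Sfun n dt t x₂ := ker_le hn hdt ht hx₂.le hx₁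
    rw [← e1] at hAlt
    rw [← f2] at hBle
    have hΔ : 0 < x₂ - x₁ := sub_pos.mpr hlt
    have hBA : (x₂ - x₁) * (B * A) = (x₂ - x₁) * 1 := by
      have h3 : x₂ - x₁ = (x₂ - x₁) * (B * A) :=
        calc x₂ - x₁ = (y₁ - y₂) * A := eq1
          _ = ((x₂ - x₁) * B) * A := by rw [eq2]
          _ = (x₂ - x₁) * (B * A) := by ring
      linarith
    have hBA1 : B * A = 1 := mul_left_cancel₀ hΔ.ne' hBA
    have h5 : A * B < (1 / y₂ * x₁) * B := mul_lt_mul_of_pos_right hAlt hBpos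
    have h6 : (1 / y₂ * x₁) * B ≤ (1 / y₂ * x₁) * (1 / x₁ * y₂) :=
      mul_le_mul_of_nonneg_left hBle (by positivity)
    have h7 : (1 / y₂ * x₁) * (1 / x₁ * y₂) = 1 := by field_simp
    have : A * B < 1 := by linarith
    rw [mul_comm] at this
    linarith
  -- existence by IVT
  have hScont : ContinuousOn (Sfun n d t) (Set.Ici 0) := Sfun_contOn hd ht
  have hTcont : ContinuousOn (Sfun n dt t) (Set.Ici 0) := Sfun_contOn hdt ht
  have hcomp : ContinuousOn (fun x => Sfun n d t (Sfun n dt t x)) (Set.Ici 0) :=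
    hScont.comp hTcont fun x hx => Sfun_nonneg hdt ht hx
  set M := Sfun n d t 0 with hM
  have hMpos : 0 < M := Sfun_pos hn hd ht hexd le_rfl
  set g : ℝ → ℝ := fun x => x - Sfun n d t (Sfun n dt t x) with hg
  have hgcont : ContinuousOn g (Set.Icc 0 M) :=
    (continuousOn_id.sub (hcomp.mono Set.Icc_subset_Ici_self))
  have hg0 : g 0 ≤ 0 := by
    have h0 : 0 ≤ Sfun n dt t 0 := Sfun_nonneg hdt ht le_rfl
    have := Sfun_pos hn hd ht hexd h0
    simp only [hg]
    linarith
  have hgM : 0 ≤ g M := by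
    have h0 : 0 ≤ Sfun n dt t M := Sfun_nonneg hdt ht hMpos.le
    have := Sfun_le (n := n) hd ht h0
    simp only [hg]
    linarith
  have hmem : (0:ℝ) ∈ Set.Icc (g 0) (g M) := ⟨hg0, hgM⟩
  obtain ⟨x, hxmem, hgx⟩ := intermediate_value_Icc hMpos.le hgcont hmem
  have hxeq : x = Sfun n d t (Sfun n dt t x) := by
    simp only [hg] at hgx
    linarith
  have hy0 : 0 ≤ Sfun n dt t x := Sfun_nonneg hdt ht hxmem.1
  have hxpos : 0 < x := by
    rw [hxeq]; exact Sfun_pos hn hd ht hexd hy0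
  set y := Sfun n dt t x with hy
  have hypos : 0 < y := Sfun_pos hn hdt ht hexdt hxmem.1
  refine ⟨(x, y), ⟨hxpos, hypos, ?_, ?_⟩, ?_⟩
  · show x = _
    rw [cond1 y hypos.le]
    exact hxeq
  · show y = _
    rw [cond2 x hxpos.le]
  · rintro ⟨a, b⟩ ⟨hapos, hbpos, hae, hbe⟩
    simp only at hapos hbpos hae hbe
    rw [cond1 b hbpos.le] at hae
    rw [cond2 a hapos.le] at hbe
    have hxS : x = Sfun n d t y := by rw [hy]; exact hxeq
    have hax : a = x := by
      rcases lt_trichotomy a x with h | h | h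
      · exact absurd h (huniq a b x y hapos hbpos hxpos hypos hae hbe hxS hy)
      · exact h
      · exact absurd h (huniq x y a b hxpos hypos hapos hbpos hxS hy hae hbe)
    have hby : b = y := by rw [hbe, hax, hy]
    exact Prod.ext hax hby
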